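/- arXiv:1610.07100 — 2 statements merged into one kernel-verified Lean document; each statement's English description precedes it below -/
import Mathlib

section
/- Let an Ising instance on N variables have a graph of maximum degree at most d (d ≥ 0 an integer). Then the number of local minima of the instance is at most 2^{N·(1 − 1/(d+1))}. -/
open Finset

/-- An assignment gives each variable the value `-1` or `1`. -/
def IsAssignment {N : ℕ} (S : Fin N → ℝ) : Prop := ∀ i, S i = -1 ∨ S i = 1

/-- Energy of an Ising instance: `H(S) = ∑ i, h i * S i + ∑_{i<j} J i j * S i * S j`. -/
noncomputable def energy {N : ℕ} (h : Fin N → ℝ) (J : Fin N → Fin N → ℝ)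
    (S : Fin N → ℝ) : ℝ :=
  ∑ i, h i * S i + ∑ i, ∑ j, if i < j then J i j * S i * S j else 0

/-- The assignment obtained from `S` by flipping the spin at `i`. -/
noncomputable def flipAt {N : ℕ} (S : Fin N → ℝ) (i : Fin N) : Fin N → ℝ :=
  Function.update S i (-(S i))

/-- A local minimum: flipping any single variable strictly increases the energy. -/
def IsingLocalMin {N : ℕ} (h : Fin N → ℝ) (J : Fin N → Fin N → ℝ) (S : Fin N → ℝ) : Prop :=
  IsAssignment S ∧ ∀ i, energy h J S < energy h J (flipAt S i)

/-- A global minimum: minimal energy among all assignments. -/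
def IsingGlobalMin {N : ℕ} (h : Fin N → ℝ) (J : Fin N → Fin N → ℝ) (S : Fin N → ℝ) : Prop :=
  IsAssignment S ∧ ∀ S', IsAssignment S' → energy h J S ≤ energy h J S'

/-- Degree of variable `i` in the graph of the instance: the number of `j ≠ i` with `J i j ≠ 0`. -/
noncomputable def degreeJ {N : ℕ} (J : Fin N → Fin N → ℝ) (i : Fin N) : ℕ :=
  Set.ncard {j | j ≠ i ∧ J i j ≠ 0}

lemma half_sum {N : ℕ} (a : Fin N → Fin N → ℝ)
    (hsym : ∀ i j, a i j = a j i) (hdiag : ∀ i, a i i = 0) :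
    ∑ i, ∑ j, (if i < j then a i j else 0) = (∑ i, ∑ j, a i j) / 2 := by
  have key : ∑ i, ∑ j, a i j
      = ∑ i, ∑ j, ((if i < j then a i j else 0) + (if j < i then a i j else 0)) := by
    refine Finset.sum_congr rfl fun i _ => Finset.sum_congr rfl fun j _ => ?_
    rcases lt_trichotomy i j with hlt | heq | hgt
    · simp [hlt, not_lt_of_gt hlt]
    · subst heq; simp [hdiag]
    · simp [hgt, not_lt_of_gt hgt]
  have swap : ∑ i, ∑ j, (if j < i then a i j else 0)
      = ∑ i, ∑ j, (if i < j then a i j else 0) := by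
    rw [Finset.sum_comm]
    refine Finset.sum_congr rfl fun i _ => Finset.sum_congr rfl fun j _ => ?_
    rw [hsym]
  simp only [Finset.sum_add_distrib] at key
  rw [swap] at key
  linarith

lemma energy_eq {N : ℕ} (h : Fin N → ℝ) (J : Fin N → Fin N → ℝ)
    (hsym : ∀ i j, J i j = J j i) (hdiag : ∀ i, J i i = 0) (S : Fin N → ℝ) :
    energy h J S = ∑ i, h i * S i + (∑ i, ∑ j, J i j * S i * S j) / 2 := by
  unfold energy
  rw [half_sum (fun i j => J i j * S i * S j) (fun i j => by rw [hsym]; ring)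
    (fun i => by rw [hdiag]; ring)]

lemma flip_diff {N : ℕ} (h : Fin N → ℝ) (J : Fin N → Fin N → ℝ)
    (hsym : ∀ i j, J i j = J j i) (hdiag : ∀ i, J i i = 0) (S : Fin N → ℝ) (i : Fin N) :
    energy h J (flipAt S i) = energy h J S + (-2) * S i * (h i + ∑ j, J i j * S j) := by
  rw [energy_eq h J hsym hdiag, energy_eq h J hsym hdiag]
  have hS' : ∀ k, flipAt S i k = if k = i then -(S i) else S k := by
    intro k; simp [flipAt, Function.update_apply]
  have lin : ∑ k, h k * flipAt S i k = ∑ k, h k * S k + (-2) * (h i * S i) := by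
    have : ∀ k, h k * flipAt S i k = h k * S k + (if k = i then (-2) * (h i * S i) else 0) := by
      intro k
      rw [hS']
      by_cases hk : k = i
      · subst hk; simp; ring
      · simp [hk]
    simp only [this, Finset.sum_add_distrib, Finset.sum_ite_eq', Finset.mem_univ, if_true]
  have quad : ∑ k, ∑ l, J k l * flipAt S i k * flipAt S i l
      = ∑ k, ∑ l, J k l * S k * S l + (-4) * S i * (∑ j, J i j * S j) := by
    have hterm : ∀ k l, J k l * flipAt S i k * flipAt S i l
        = J k l * S k * S l + ((if k = i then (-2) * (J i l * S i * S l) else 0)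
          + (if l = i then (-2) * (J k i * S k * S i) else 0)
          + (if k = i then (if l = i then 4 * (J i i * S i * S i) else 0) else 0)) := by
      intro k l
      rw [hS', hS']
      by_cases hk : k = i <;> by_cases hl : l = i
      · subst hk; subst hl; simp; ring
      · subst hk; simp [hl]; ring
      · subst hl; simp [hk]; ring
      · simp [hk, hl]
    simp only [hterm, Finset.sum_add_distrib]
    have e1 : ∑ k, ∑ l, (if k = i then (-2) * (J i l * S i * S l) else 0)
        = (-2) * S i * ∑ j, J i j * S j := by
      rw [Finset.sum_comm]
      simp only [Finset.sum_ite_eq', Finset.mem_univ, if_true, Finset.mul_sum]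
      refine Finset.sum_congr rfl fun j _ => by ring
    have e2 : ∑ k, ∑ l, (if l = i then (-2) * (J k i * S k * S i) else 0)
        = (-2) * S i * ∑ j, J i j * S j := by
      simp only [Finset.sum_ite_eq', Finset.mem_univ, if_true, Finset.mul_sum]
      refine Finset.sum_congr rfl fun j _ => by rw [hsym]; ring
    have e3 : ∑ k, ∑ l, (if k = i then (if l = i then 4 * (J i i * S i * S i) else 0) else 0)
        = 0 := by
      simp [Finset.sum_ite_eq', hdiag]
    rw [e1, e2, e3]
    ring
  rw [lin, quad]
  ring

lemma localmin_sign {N : ℕ} {h : Fin N → ℝ} {J : Fin N → Fin N → ℝ}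
    (hsym : ∀ i j, J i j = J j i) (hdiag : ∀ i, J i i = 0) {S : Fin N → ℝ}
    (hS : IsingLocalMin h J S) (i : Fin N) :
    S i * (h i + ∑ j, J i j * S j) < 0 := by
  have := hS.2 i
  rw [flip_diff h J hsym hdiag S i] at this
  linarith

lemma indep_set {N d : ℕ} (J : Fin N → Fin N → ℝ)
    (hsym : ∀ i j, J i j = J j i) (hdiag : ∀ i, J i i = 0)
    (hdeg : ∀ i, degreeJ J i ≤ d) :
    ∃ I : Finset (Fin N), (∀ i ∈ I, ∀ j ∈ I, i ≠ j → J i j = 0) ∧ N ≤ (d + 1) * I.card := by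
  classical
  have main : ∀ n (T : Finset (Fin N)), T.card ≤ n →
      ∃ I, I ⊆ T ∧ (∀ i ∈ I, ∀ j ∈ I, i ≠ j → J i j = 0) ∧ T.card ≤ (d + 1) * I.card := by
    intro n
    induction n with
    | zero =>
      intro T hT
      exact ⟨∅, Finset.empty_subset _, by simp, by simpa using hT⟩
    | succ n ih =>
      intro T hT
      rcases T.eq_empty_or_nonempty with rfl | ⟨v, hv⟩
      · exact ⟨∅, Finset.empty_subset _, by simp, by simp⟩
      · set Nv : Finset (Fin N) := Finset.univ.filter (fun j => J v j ≠ 0) with hNvdef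
        have hNvcard : Nv.card ≤ d := by
          have hset : {j | j ≠ v ∧ J v j ≠ 0} = (↑Nv : Set (Fin N)) := by
            ext j
            simp only [Set.mem_setOf_eq, hNvdef, Finset.coe_filter, Finset.mem_univ, true_and,
              Set.mem_setOf_eq]
            constructor
            · rintro ⟨_, hj⟩; exact hj
            · intro hj; exact ⟨fun hjv => hj (hjv ▸ hdiag v), hj⟩
          have := hdeg v
          rwa [degreeJ, hset, Set.ncard_coe_finset] at this
        set T' : Finset (Fin N) := T \ insert v Nv with hT'def
        have hT'sub : T' ⊆ T := Finset.sdiff_subset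
        have hvT' : v ∉ T' := by simp [hT'def]
        have hT'card : T'.card ≤ n := by
          have : T'.card < T.card := Finset.card_lt_card (Finset.ssubset_iff_of_subset hT'sub |>.2
            ⟨v, hv, hvT'⟩)
          omega
        obtain ⟨I', hI'sub, hI'indep, hI'card⟩ := ih T' hT'card
        have hvI' : v ∉ I' := fun hmem => hvT' (hI'sub hmem)
        refine ⟨insert v I', ?_, ?_, ?_⟩
        · intro x hx
          rcases Finset.mem_insert.1 hx with rfl | hx
          · exact hv
          · exact hT'sub (hI'sub hx)
        · intro x hx y hy hxy
          rcases Finset.mem_insert.1 hx with rfl | hxI <;>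
            rcases Finset.mem_insert.1 hy with rfl | hyI
          · exact absurd rfl hxy
          · have hyNv : y ∉ Nv := by
              intro hyNv
              have hmem : y ∈ insert x Nv := Finset.mem_insert_of_mem hyNv
              exact absurd (hI'sub hyI) (by simp [hT'def, hmem])
            simpa [hNvdef] using hyNv
          · have hxNv : x ∉ Nv := by
              intro hxNv
              have hmem : x ∈ insert y Nv := Finset.mem_insert_of_mem hxNv
              exact absurd (hI'sub hxI) (by simp [hT'def, hmem])
            rw [hsym]
            simpa [hNvdef] using hxNv
          · exact hI'indep x hxI y hyI hxy
        · have hcover : T ⊆ T' ∪ insert v Nv := by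
            intro x hx
            by_cases hxi : x ∈ insert v Nv
            · exact Finset.mem_union_right _ hxi
            · exact Finset.mem_union_left _ (Finset.mem_sdiff.2 ⟨hx, hxi⟩)
          have h1 : T.card ≤ T'.card + (insert v Nv).card :=
            le_trans (Finset.card_le_card hcover) (Finset.card_union_le _ _)
          have h2 : (insert v Nv).card ≤ d + 1 :=
            le_trans (Finset.card_insert_le _ _) (by omega)
          rw [Finset.card_insert_of_notMem hvI', Nat.mul_add, Nat.mul_one]
          omega
  obtain ⟨I, _, hindep, hcard⟩ := main N Finset.univ (by simp)
  exact ⟨I, hindep, by simpa using hcard⟩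

/-- an Ising instance whose graph has maximum degree at most `d` has at most
`2 ^ (N * (1 - 1/(d+1)))` local minima. -/
theorem stmt2 (N d : ℕ) (h : Fin N → ℝ) (J : Fin N → Fin N → ℝ)
    (hsym : ∀ i j, J i j = J j i) (hdiag : ∀ i, J i i = 0)
    (hdeg : ∀ i, degreeJ J i ≤ d) :
    (Set.ncard {S : Fin N → ℝ | IsingLocalMin h J S} : ℝ) ≤
      (2 : ℝ) ^ ((N : ℝ) * (1 - 1 / ((d : ℝ) + 1))) := by
  classical
  obtain ⟨I, hindep, hIcard⟩ := indep_set J hsym hdiag hdeg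
  set M : Finset (Fin N) := Finset.univ \ I with hMdef
  set F : (Fin N → ℝ) → ({x // x ∈ M} → Bool) :=
    fun S j => decide (S j.1 = 1) with hFdef
  have hinj : Set.InjOn F {S : Fin N → ℝ | IsingLocalMin h J S} := by
    intro S hS S' hS' hFS
    have hag : ∀ j, j ∉ I → S j = S' j := by
      intro j hj
      have hjM : j ∈ M := by simp [hMdef, hj]
      have := congrFun hFS ⟨j, hjM⟩
      simp only [hFdef, decide_eq_decide] at this
      rcases hS.1 j with h1 | h1 <;> rcases hS'.1 j with h2 | h2 <;>
        simp [h1, h2] at this ⊢ <;> norm_num at this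
    funext i
    by_cases hiI : i ∈ I
    · have hsum : ∑ j, J i j * S j = ∑ j, J i j * S' j := by
        refine Finset.sum_congr rfl fun j _ => ?_
        by_cases hjI : j ∈ I
        · by_cases hji : j = i
          · subst hji; rw [hdiag]; ring
          · rw [hindep i hiI j hjI (Ne.symm hji)]; ring
        · rw [hag j hjI]
      have hc1 := localmin_sign hsym hdiag hS i
      have hc2 := localmin_sign hsym hdiag hS' i
      rw [← hsum] at hc2
      rcases hS.1 i with h1 | h1 <;> rcases hS'.1 i with h2 | h2 <;>
        rw [h1, h2] <;> rw [h1] at hc1 <;> rw [h2] at hc2 <;> nlinarith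
    · exact hag i hiI
  have hcount : Set.ncard {S : Fin N → ℝ | IsingLocalMin h J S} ≤ 2 ^ (N - I.card) := by
    have himg := Set.ncard_image_of_injOn hinj
    have hle : (F '' {S : Fin N → ℝ | IsingLocalMin h J S}).ncard
        ≤ Nat.card ({x // x ∈ M} → Bool) := by
      rw [← Set.ncard_univ]
      exact Set.ncard_le_ncard (Set.subset_univ _) Set.finite_univ
    have hcard : Nat.card ({x // x ∈ M} → Bool) = 2 ^ (N - I.card) := by
      rw [Nat.card_eq_fintype_card, Fintype.card_fun, Fintype.card_bool, Fintype.card_coe]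
      congr 1
      rw [hMdef, Finset.card_univ_diff, Fintype.card_fin]
    rw [← himg, ← hcard]
    exact hle
  have hIle : I.card ≤ N := by
    have := Finset.card_le_univ I
    simpa using this
  have hexp : ((2 : ℝ)) ^ ((N - I.card : ℕ) : ℝ) ≤ (2 : ℝ) ^ ((N : ℝ) * (1 - 1 / ((d : ℝ) + 1))) := by
    apply Real.rpow_le_rpow_of_exponent_le one_le_two
    have hd : (0 : ℝ) < (d : ℝ) + 1 := by positivity
    have hN : (N : ℝ) / ((d : ℝ) + 1) ≤ (I.card : ℝ) := by
      rw [div_le_iff₀ hd]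
      have : (N : ℝ) ≤ ((d : ℝ) + 1) * (I.card : ℝ) := by exact_mod_cast hIcard
      linarith
    have hcast : ((N - I.card : ℕ) : ℝ) = (N : ℝ) - (I.card : ℝ) := by
      push_cast [Nat.cast_sub hIle]; ring
    rw [hcast]
    have : (N : ℝ) * (1 - 1 / ((d : ℝ) + 1)) = (N : ℝ) - (N : ℝ) / ((d : ℝ) + 1) := by ring
    rw [this]
    linarith
  calc (Set.ncard {S : Fin N → ℝ | IsingLocalMin h J S} : ℝ)
      ≤ ((2 ^ (N - I.card) : ℕ) : ℝ) := by exact_mod_cast hcount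
    _ = (2 : ℝ) ^ ((N - I.card : ℕ) : ℝ) := by
        rw [Real.rpow_natCast]; push_cast; ring
    _ ≤ _ := hexp
end

section
/- Let F ⊆ T be the set of free variables of H^eff. Then every local minimum S of H^eff satisfies S i = −sign(h^eff i) for every fixed variable i with h^eff i ≠ 0, and if some fixed variable i has h^eff i = 0 then H^eff has no local minimum at all. Consequently H^eff has at most 2^{|F|} local minima. -/
open Finset

/-- `h^max i = ∑_{j ∈ T} |J i j|`. -/
noncomputable def hmax {n : ℕ} (J : Fin n → Fin n → ℝ) (i : Fin n) : ℝ := ∑ j, |J i j|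

lemma flip_energy {N : ℕ} (h : Fin N → ℝ) (J : Fin N → Fin N → ℝ)
    (hsym : ∀ i j, J i j = J j i) (hdiag : ∀ i, J i i = 0)
    (S : Fin N → ℝ) (k : Fin N) :
    energy h J (flipAt S k) = energy h J S - 2 * S k * (h k + ∑ j, J k j * S j) := by
  classical
  unfold energy flipAt
  simp only [Function.update_apply]
  have e1 : ∑ i, h i * (if i = k then -(S k) else S i)
      = ∑ i, h i * S i + (-(2 * h k * S k)) := by
    have step : ∀ i ∈ Finset.univ, h i * (if i = k then -(S k) else S i)
        = h i * S i + (if i = k then -(2 * h k * S k) else 0) := by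
      intro i _
      by_cases hi : i = k
      · subst hi; simp; ring
      · simp [hi]
    rw [Finset.sum_congr rfl step, Finset.sum_add_distrib,
      Finset.sum_ite_eq' Finset.univ k]
    simp
  set C : Fin N → ℝ := fun j => if k < j then -(2 * J k j * S k * S j) else 0 with hC
  set D : Fin N → ℝ := fun i => if i < k then -(2 * J i k * S i * S k) else 0 with hD
  have e2 : ∑ i, ∑ j, (if i < j then J i j * (if i = k then -(S k) else S i) *
        (if j = k then -(S k) else S j) else 0)
      = ∑ i, ∑ j, (if i < j then J i j * S i * S j else 0)
        + (-2 * S k) * ∑ j, J k j * S j := by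
    have step : ∀ i ∈ Finset.univ, ∀ j ∈ Finset.univ,
        (if i < j then J i j * (if i = k then -(S k) else S i) *
          (if j = k then -(S k) else S j) else 0)
        = (if i < j then J i j * S i * S j else 0)
          + ((if i = k then C j else 0) + (if j = k then D i else 0)) := by
      intro i _ j _
      by_cases hi : i = k <;> by_cases hj : j = k <;>
        simp only [hC, hD, hi, hj, if_true, if_false] <;>
        split_ifs <;> first | ring1 | simp [hdiag]
    calc ∑ i, ∑ j, (if i < j then J i j * (if i = k then -(S k) else S i) *
          (if j = k then -(S k) else S j) else 0)
        = ∑ i, ∑ j, ((if i < j then J i j * S i * S j else 0)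
          + ((if i = k then C j else 0) + (if j = k then D i else 0))) := by
          refine Finset.sum_congr rfl fun i hi => Finset.sum_congr rfl fun j hj => ?_
          exact step i hi j hj
      _ = ∑ i, ∑ j, (if i < j then J i j * S i * S j else 0)
          + (∑ i, ∑ j, (if i = k then C j else 0) + ∑ i, ∑ j, (if j = k then D i else 0)) := by
          simp [Finset.sum_add_distrib]
      _ = ∑ i, ∑ j, (if i < j then J i j * S i * S j else 0)
          + (∑ j, C j + ∑ i, D i) := by
          congr 1
          congr 1
          · have : ∀ i, (∑ j, (if i = k then C j else 0)) = if i = k then ∑ j, C j else 0 := by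
              intro i; by_cases hi : i = k <;> simp [hi]
            rw [Finset.sum_congr rfl fun i _ => this i, Finset.sum_ite_eq' Finset.univ k]
            simp
          · have : ∀ i, (∑ j, (if j = k then D i else 0)) = D i := by
              intro i; rw [Finset.sum_ite_eq' Finset.univ k]; simp
            rw [Finset.sum_congr rfl fun i _ => this i]
      _ = ∑ i, ∑ j, (if i < j then J i j * S i * S j else 0)
          + (-2 * S k) * ∑ j, J k j * S j := by
          congr 1
          rw [← Finset.sum_add_distrib, Finset.mul_sum]
          refine Finset.sum_congr rfl fun j _ => ?_
          by_cases hj : j = k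
          · subst hj; simp [hC, hD, hdiag]
          · rcases lt_trichotomy k j with hlt | heq | hgt
            · simp only [hC, hD, if_pos hlt, if_neg (by omega : ¬ j < k)]; ring
            · exact absurd heq.symm hj
            · simp only [hC, hD, if_neg (by omega : ¬ k < j), if_pos hgt, hsym j k]; ring
  rw [e1, e2]; ring


lemma key_ineq {N : ℕ} (h : Fin N → ℝ) (J : Fin N → Fin N → ℝ)
    (hsym : ∀ i j, J i j = J j i) (hdiag : ∀ i, J i i = 0)
    (S : Fin N → ℝ) (hS : IsingLocalMin h J S) (i : Fin N) :
    S i * (h i + ∑ j, J i j * S j) < 0 := by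
  have := hS.2 i
  rw [flip_energy h J hsym hdiag S i] at this
  nlinarith [this]

lemma abs_L_le {N : ℕ} (J : Fin N → Fin N → ℝ) (S : Fin N → ℝ)
    (hS : IsAssignment S) (i : Fin N) :
    |∑ j, J i j * S j| ≤ hmax J i := by
  calc |∑ j, J i j * S j| ≤ ∑ j, |J i j * S j| := Finset.abs_sum_le_sum_abs _ _
    _ = ∑ j, |J i j| := by
        refine Finset.sum_congr rfl fun j _ => ?_
        rw [abs_mul]
        rcases hS j with hj | hj <;> simp [hj]
    _ = hmax J i := rfl

lemma fixed_sign {N : ℕ} (h : Fin N → ℝ) (J : Fin N → Fin N → ℝ)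
    (hsym : ∀ i j, J i j = J j i) (hdiag : ∀ i, J i i = 0)
    (S : Fin N → ℝ) (hS : IsingLocalMin h J S) (i : Fin N)
    (hfix : hmax J i ≤ |h i|) (hne : h i ≠ 0) : S i = -Real.sign (h i) := by
  have key := key_ineq h J hsym hdiag S hS i
  have habs := abs_L_le J S hS.1 i
  have habs' := abs_le.mp (habs.trans hfix)
  rcases lt_or_gt_of_ne hne with hlt | hgt
  · -- h i < 0 : |h i| = -h i, so h i + L ≤ 0; product < 0 forces S i = 1
    rw [Real.sign_of_neg hlt]
    have : |h i| = -h i := abs_of_neg hlt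
    rw [this] at habs'
    rcases hS.1 i with h1 | h1
    · exfalso; rw [h1] at key; nlinarith
    · rw [h1]; norm_num
  · rw [Real.sign_of_pos hgt]
    have : |h i| = h i := abs_of_pos hgt
    rw [this] at habs'
    rcases hS.1 i with h1 | h1
    · rw [h1]
    · exfalso; rw [h1] at key; nlinarith

lemma no_min {N : ℕ} (h : Fin N → ℝ) (J : Fin N → Fin N → ℝ)
    (hsym : ∀ i j, J i j = J j i) (hdiag : ∀ i, J i i = 0)
    (i : Fin N) (hfix : hmax J i ≤ |h i|) (hzero : h i = 0)
    (S : Fin N → ℝ) (hS : IsingLocalMin h J S) : False := by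
  have key := key_ineq h J hsym hdiag S hS i
  have habs := abs_L_le J S hS.1 i
  rw [hzero] at hfix
  simp only [abs_zero] at hfix
  have : |∑ j, J i j * S j| ≤ 0 := habs.trans hfix
  have hL : ∑ j, J i j * S j = 0 := abs_nonpos_iff.mp this
  rw [hzero, hL] at key
  simp at key

/-- every local minimum of `H^eff` satisfies `S i = -sign(h^eff i)` for every
fixed variable `i` (i.e. with `|h^eff i| ≥ h^max i`) having `h^eff i ≠ 0`; if some fixed
variable has `h^eff i = 0` there is no local minimum; and the number of local minima is at
most `2 ^ |F|` where `F` is the set of free variables (those with `|h^eff i| < h^max i`). -/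
theorem stmt4 (n : ℕ) (heff : Fin n → ℝ) (J : Fin n → Fin n → ℝ)
    (hsym : ∀ i j, J i j = J j i) (hdiag : ∀ i, J i i = 0) :
    (∀ S, IsingLocalMin heff J S →
      ∀ i, hmax J i ≤ |heff i| → heff i ≠ 0 → S i = -Real.sign (heff i)) ∧
    ((∃ i, hmax J i ≤ |heff i| ∧ heff i = 0) →
      {S : Fin n → ℝ | IsingLocalMin heff J S} = ∅) ∧
    Set.ncard {S : Fin n → ℝ | IsingLocalMin heff J S} ≤
      2 ^ Set.ncard {i : Fin n | |heff i| < hmax J i} := by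
  classical
  refine ⟨fun S hS i hfix hne => fixed_sign heff J hsym hdiag S hS i hfix hne,
    fun ⟨i, hfix, hz⟩ => Set.eq_empty_iff_forall_notMem.mpr
      (fun S hS => no_min heff J hsym hdiag i hfix hz S hS), ?_⟩
  set F : Set (Fin n) := {i : Fin n | |heff i| < hmax J i} with hF
  set M : Set (Fin n → ℝ) := {S : Fin n → ℝ | IsingLocalMin heff J S} with hM
  set φ : M → (F → Bool) := fun S => fun i => decide (S.1 i.1 = 1) with hφ
  have hinj : Function.Injective φ := by
    rintro ⟨S, hS⟩ ⟨T, hT⟩ heq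
    have heq' : ∀ i : F, (decide (S i.1 = 1)) = (decide (T i.1 = 1)) :=
      fun i => congrFun heq i
    ext i
    simp only
    by_cases hi : i ∈ F
    · have := heq' ⟨i, hi⟩
      rcases hS.1 i with h1 | h1 <;> rcases hT.1 i with h2 | h2 <;>
        simp only [h1, h2] at this ⊢ <;> norm_num at this
    · have hfix : hmax J i ≤ |heff i| := le_of_not_gt hi
      by_cases hz : heff i = 0
      · exact absurd hS (no_min heff J hsym hdiag i hfix hz S)
      · rw [fixed_sign heff J hsym hdiag S hS i hfix hz,
          fixed_sign heff J hsym hdiag T hT i hfix hz]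
  have hcard : Nat.card M ≤ Nat.card (F → Bool) :=
    Nat.card_le_card_of_injective φ hinj
  have h2 : Nat.card (F → Bool) = 2 ^ F.ncard := by
    rw [Nat.card_fun, Nat.card_eq_fintype_card (α := Bool), Nat.card_coe_set_eq]
    simp
  calc M.ncard = Nat.card M := (Nat.card_coe_set_eq M).symm
    _ ≤ Nat.card (F → Bool) := hcard
    _ = 2 ^ F.ncard := h2
end
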